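/- Let p be an odd prime, ν ≥ 1 an integer, and A, B, C, D integers. If min(ν, v_p(C)) < min(ν, v_p(A)) or min(ν, v_p(D)) < min(ν, v_p(B)), where v_p denotes the p-adic valuation (with v_p(0) treated as larger than ν), then ∑_{x,y mod p^ν} e_{p^ν}(Ax² + By² + Cx + Dy) = 0. -/

import Mathlib

/-- `e_q(t) = exp(2πit/q)`. -/
noncomputable def eq' (q : ℕ) (t : ℤ) : ℂ :=
  Complex.exp (2 * Real.pi * Complex.I * t / q)

lemma eq'_add (q : ℕ) (s t : ℤ) : eq' q (s + t) = eq' q s * eq' q t := by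
  rw [eq', eq', eq', ← Complex.exp_add]
  push_cast
  ring_nf

lemma eq'_int_mul (q : ℕ) (hq : 0 < q) (k : ℤ) : eq' q ((q : ℤ) * k) = 1 := by
  have hq' : (q : ℂ) ≠ 0 := Nat.cast_ne_zero.mpr hq.ne'
  rw [eq', show 2 * Real.pi * Complex.I * (((q : ℤ) * k : ℤ) : ℂ) / q
      = (k : ℂ) * (2 * Real.pi * Complex.I) by push_cast; field_simp]
  exact Complex.exp_int_mul_two_pi_mul_I k

lemma eq'_congr (q : ℕ) (hq : 0 < q) {s t : ℤ} (h : (q : ℤ) ∣ s - t) :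
    eq' q s = eq' q t := by
  obtain ⟨k, hk⟩ := h
  have : s = t + (q : ℤ) * k := by linarith
  rw [this, eq'_add, eq'_int_mul q hq, mul_one]

lemma eq'_ne_one (q : ℕ) (hq : 0 < q) {t : ℤ} (h : ¬ (q : ℤ) ∣ t) : eq' q t ≠ 1 := by
  intro h1
  rw [eq', Complex.exp_eq_one_iff] at h1
  obtain ⟨n, hn⟩ := h1
  apply h
  refine ⟨n, ?_⟩
  have hq' : (q : ℂ) ≠ 0 := Nat.cast_ne_zero.mpr hq.ne'
  have hπ : (2 * Real.pi * Complex.I) ≠ 0 := by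
    simp [Real.pi_ne_zero, Complex.I_ne_zero]
  have : (t : ℂ) = (q : ℂ) * n := by
    field_simp at hn
    have := mul_left_cancel₀ hπ (by linear_combination (2 * Real.pi * Complex.I) * hn :
      (2 * Real.pi * Complex.I) * (t : ℂ) = (2 * Real.pi * Complex.I) * ((q : ℂ) * n))
    exact this
  exact_mod_cast this

lemma one_dim_vanish (p ν : ℕ) (hp : p.Prime) (hν : 1 ≤ ν) (A C : ℤ)
    (h : min ν (if C = 0 then ν + 1 else padicValInt p C)
          < min ν (if A = 0 then ν + 1 else padicValInt p A)) :
    ∑ x ∈ Finset.range (p ^ ν), eq' (p ^ ν) (A * (x : ℤ) ^ 2 + C * (x : ℤ)) = 0 := by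
  haveI : Fact p.Prime := ⟨hp⟩
  have hppos : 0 < p := hp.pos
  set n : ℕ := p ^ ν with hn
  have hnpos : 0 < n := pow_pos hppos ν
  haveI : NeZero n := ⟨hnpos.ne'⟩
  -- C ≠ 0 and γ < ν
  have hγν : min ν (if C = 0 then ν + 1 else padicValInt p C) < ν :=
    lt_of_lt_of_le h (min_le_left _ _)
  have hC0 : C ≠ 0 := by
    intro hc
    simp [hc] at hγν
  rw [if_neg hC0] at h hγν
  set γ : ℕ := padicValInt p C with hγ
  have hγlt : γ < ν := by omega
  have hA : (p : ℤ) ^ (γ + 1) ∣ A := by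
    rcases eq_or_ne A 0 with rfl | hA0
    · exact dvd_zero _
    · rw [if_neg hA0] at h
      rw [padicValInt_dvd_iff]
      right
      omega
  have hC : ¬ (p : ℤ) ^ (γ + 1) ∣ C := by
    intro hd
    rcases (padicValInt_dvd_iff _ _).mp hd with h1 | h1
    · exact hC0 h1
    · omega
  set d : ℕ := ν - γ - 1 with hd
  have hnd : (n : ℤ) = (p : ℤ) ^ (γ + 1) * (p : ℤ) ^ d := by
    rw [← pow_add, hn]
    push_cast
    congr 1
    omega
  set c : ℤ := C * (p : ℤ) ^ d with hcdef
  have hc : ¬ (n : ℤ) ∣ c := by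
    intro hdvd
    apply hC
    obtain ⟨k, hk⟩ := hdvd
    have hp0 : (p : ℤ) ^ d ≠ 0 := pow_ne_zero _ (by exact_mod_cast hppos.ne')
    refine ⟨k, mul_right_cancel₀ hp0 ?_⟩
    rw [hcdef, hnd] at hk
    linear_combination hk
  have shift : ∀ a b : ℤ, (n : ℤ) ∣ a - (b + (p : ℤ) ^ d) →
      eq' n (A * a ^ 2 + C * a) = eq' n c * eq' n (A * b ^ 2 + C * b) := by
    intro a b hab
    obtain ⟨A', hA'⟩ := hA
    have step1 : eq' n (A * a ^ 2 + C * a)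
        = eq' n (A * (b + (p : ℤ) ^ d) ^ 2 + C * (b + (p : ℤ) ^ d)) := by
      apply eq'_congr _ hnpos
      have hdiff : A * a ^ 2 + C * a - (A * (b + (p : ℤ) ^ d) ^ 2 + C * (b + (p : ℤ) ^ d))
          = (a - (b + (p : ℤ) ^ d)) * (A * (a + (b + (p : ℤ) ^ d)) + C) := by ring
      rw [hdiff]
      exact hab.mul_right _
    have step2 : eq' n (A * (b + (p : ℤ) ^ d) ^ 2 + C * (b + (p : ℤ) ^ d))
        = eq' n (c + (A * b ^ 2 + C * b)) := by
      apply eq'_congr _ hnpos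
      refine ⟨A' * (2 * b + (p : ℤ) ^ d), ?_⟩
      rw [hnd, hA', hcdef]
      ring
    rw [step1, step2, eq'_add]
  set g : ZMod n → ℂ := fun z => eq' n (A * (z.val : ℤ) ^ 2 + C * (z.val : ℤ)) with hg
  have hsum1 : ∑ x ∈ Finset.range n, eq' n (A * (x : ℤ) ^ 2 + C * (x : ℤ))
      = ∑ z : ZMod n, g z := by
    refine Finset.sum_nbij' (fun x => (x : ZMod n)) (fun z => z.val) ?_ ?_ ?_ ?_ ?_
    · intro a _; exact Finset.mem_univ _
    · intro z _; exact Finset.mem_range.mpr (ZMod.val_lt z)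
    · intro a ha
      exact ZMod.val_natCast_of_lt (Finset.mem_range.mp ha)
    · intro z _
      simp [ZMod.natCast_val, ZMod.cast_id]
    · intro a ha
      rw [hg]
      simp only
      rw [ZMod.val_natCast_of_lt (Finset.mem_range.mp ha)]
  have hshiftz : ∀ z : ZMod n, eq' n c * g z = g (z + (p : ZMod n) ^ d) := by
    intro z
    rw [hg]
    simp only
    rw [← shift ((z + (p : ZMod n) ^ d).val : ℤ) (z.val : ℤ) ?_]
    have key : ((((z + (p : ZMod n) ^ d).val : ℤ) - ((z.val : ℤ) + (p : ℤ) ^ d) : ℤ) : ZMod n) = 0 := by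
      push_cast
      rw [ZMod.natCast_val, ZMod.natCast_val, ZMod.cast_id, ZMod.cast_id]
      ring
    exact (ZMod.intCast_zmod_eq_zero_iff_dvd _ _).mp key
  have hsum2 : ∑ z : ZMod n, eq' n c * g z = ∑ z : ZMod n, g z :=
    Fintype.sum_equiv (Equiv.addRight ((p : ZMod n) ^ d)) _ _ (fun z => hshiftz z)
  rw [hsum1]
  have hfinal : (eq' n c - 1) * ∑ z : ZMod n, g z = 0 := by
    rw [sub_mul, one_mul, Finset.mul_sum, hsum2, sub_self]
  rcases mul_eq_zero.mp hfinal with h1 | h1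
  · exact absurd (sub_eq_zero.mp h1) (eq'_ne_one n hnpos hc)
  · exact h1

/-- For an odd prime `p`, `ν ≥ 1` and integers `A, B, C, D`, if
`min(ν, v_p(C)) < min(ν, v_p(A))` or `min(ν, v_p(D)) < min(ν, v_p(B))`
(with `v_p(0)` treated as larger than `ν`), then
`∑_{x,y mod p^ν} e_{p^ν}(Ax² + By² + Cx + Dy) = 0`. -/
theorem exp_sum_quadratic_vanishes (p : ℕ) (hp : p.Prime) (hodd : Odd p)
    (ν : ℕ) (hν : 1 ≤ ν) (A B C D : ℤ)
    (h : min ν (if C = 0 then ν + 1 else padicValInt p C)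
          < min ν (if A = 0 then ν + 1 else padicValInt p A) ∨
        min ν (if D = 0 then ν + 1 else padicValInt p D)
          < min ν (if B = 0 then ν + 1 else padicValInt p B)) :
    ∑ x ∈ Finset.range (p ^ ν), ∑ y ∈ Finset.range (p ^ ν),
        eq' (p ^ ν) (A * (x : ℤ) ^ 2 + B * (y : ℤ) ^ 2 + C * (x : ℤ) + D * (y : ℤ)) = 0 := by
  have split : ∀ x y : ℕ,
      eq' (p ^ ν) (A * (x : ℤ) ^ 2 + B * (y : ℤ) ^ 2 + C * (x : ℤ) + D * (y : ℤ))
        = eq' (p ^ ν) (A * (x : ℤ) ^ 2 + C * (x : ℤ)) *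
          eq' (p ^ ν) (B * (y : ℤ) ^ 2 + D * (y : ℤ)) := by
    intro x y
    rw [← eq'_add]
    ring_nf
  calc ∑ x ∈ Finset.range (p ^ ν), ∑ y ∈ Finset.range (p ^ ν),
        eq' (p ^ ν) (A * (x : ℤ) ^ 2 + B * (y : ℤ) ^ 2 + C * (x : ℤ) + D * (y : ℤ))
      = (∑ x ∈ Finset.range (p ^ ν), eq' (p ^ ν) (A * (x : ℤ) ^ 2 + C * (x : ℤ))) *
        (∑ y ∈ Finset.range (p ^ ν), eq' (p ^ ν) (B * (y : ℤ) ^ 2 + D * (y : ℤ))) := by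
        rw [Finset.sum_mul_sum]
        exact Finset.sum_congr rfl fun x _ => Finset.sum_congr rfl fun y _ => split x y
    _ = 0 := by
        rcases h with h | h
        · rw [one_dim_vanish p ν hp hν A C h, zero_mul]
        · rw [one_dim_vanish p ν hp hν B D h, mul_zero]
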